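/- arXiv:1909.07616 — 2 statements merged into one kernel-verified Lean document; each statement's English description precedes it below -/
import Mathlib

section
/- Let θ₁,…,θ_M be i.i.d. uniform on [0,2π) and u ∈ ℂ^M a fixed unit vector. Set X = |∑_{m=1}^M (1/√M) e^{-iθ_m} u_m|. Then for every h ∈ [0, M/2), E[e^{h X²}] ≤ (1 - 2h/M)^{-1/2}. -/
open MeasureTheory ProbabilityTheory Complex Finset

/-- The uniform probability measure on `[0, 2π)`. -/
noncomputable def uniformAngle : Measure ℝ :=
  ENNReal.ofReal (2 * Real.pi)⁻¹ • MeasureTheory.volume.restrict (Set.Ico 0 (2 * Real.pi))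

instance : IsProbabilityMeasure uniformAngle := by
  constructor
  rw [uniformAngle]
  simp only [Measure.smul_apply, Measure.restrict_apply MeasurableSet.univ,
    Set.univ_inter, Real.volume_Ico, smul_eq_mul, sub_zero]
  rw [← ENNReal.ofReal_mul (by positivity), inv_mul_cancel₀ (by positivity), ENNReal.ofReal_one]

lemma uniformAngle_exp_int (n : ℤ) :
    ∫ t, Complex.exp (n * t * Complex.I) ∂uniformAngle = if n = 0 then 1 else 0 := by
  split_ifs with hn
  · subst hn; simp
  · have h2pi : (0:ℝ) ≤ 2 * Real.pi := by positivity
    rw [uniformAngle, integral_smul_measure]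
    have hset : ∫ t in Set.Ico 0 (2*Real.pi), Complex.exp (n * t * Complex.I) = 0 := by
      rw [integral_Ico_eq_integral_Ioo, ← integral_Ioc_eq_integral_Ioo,
        ← intervalIntegral.integral_of_le h2pi]
      have hc : (n : ℂ) * Complex.I ≠ 0 :=
        mul_ne_zero (by exact_mod_cast hn) Complex.I_ne_zero
      have key := integral_exp_mul_complex (a := 0) (b := 2*Real.pi) hc
      simp_rw [mul_right_comm (n:ℂ) Complex.I _] at key
      rw [key]
      have : (n:ℂ) * ↑(2*Real.pi) * Complex.I = n * (2 * (Real.pi:ℂ) * Complex.I) := by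
        push_cast; ring
      rw [this, Complex.exp_int_mul_two_pi_mul_I]
      simp
    rw [hset, smul_zero]


lemma indepFun_integral_mul_complex {Ω : Type*} [MeasurableSpace Ω] {P : Measure Ω}
    {U V : Ω → ℂ} (hUV : IndepFun U V P) (hU : Integrable U P) (hV : Integrable V P) :
    ∫ ω, U ω * V ω ∂P = (∫ ω, U ω ∂P) * ∫ ω, V ω ∂P := by
  have hUVint : Integrable (fun ω => U ω * V ω) P := by
    simpa [Pi.mul_def] using hUV.integrable_mul hU hV
  have hcomp : ∀ (f g : ℂ → ℝ), Measurable f → Measurable g →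
      IndepFun (fun ω => f (U ω)) (fun ω => g (V ω)) P := fun f g hf hg => hUV.comp hf hg
  have hrr := (hcomp _ _ Complex.measurable_re Complex.measurable_re).integral_fun_mul_eq_mul_integral
    hU.re.aestronglyMeasurable hV.re.aestronglyMeasurable
  have hri := (hcomp _ _ Complex.measurable_re Complex.measurable_im).integral_fun_mul_eq_mul_integral
    hU.re.aestronglyMeasurable hV.im.aestronglyMeasurable
  have hir := (hcomp _ _ Complex.measurable_im Complex.measurable_re).integral_fun_mul_eq_mul_integral
    hU.im.aestronglyMeasurable hV.re.aestronglyMeasurable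
  have hii := (hcomp _ _ Complex.measurable_im Complex.measurable_im).integral_fun_mul_eq_mul_integral
    hU.im.aestronglyMeasurable hV.im.aestronglyMeasurable
  have hintrr : Integrable (fun ω => (U ω).re * (V ω).re) P := by
    simpa [Pi.mul_def] using
      (hcomp _ _ Complex.measurable_re Complex.measurable_re).integrable_mul hU.re hV.re
  have hintri : Integrable (fun ω => (U ω).re * (V ω).im) P := by
    simpa [Pi.mul_def] using
      (hcomp _ _ Complex.measurable_re Complex.measurable_im).integrable_mul hU.re hV.im
  have hintir : Integrable (fun ω => (U ω).im * (V ω).re) P := by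
    simpa [Pi.mul_def] using
      (hcomp _ _ Complex.measurable_im Complex.measurable_re).integrable_mul hU.im hV.re
  have hintii : Integrable (fun ω => (U ω).im * (V ω).im) P := by
    simpa [Pi.mul_def] using
      (hcomp _ _ Complex.measurable_im Complex.measurable_im).integrable_mul hU.im hV.im
  apply Complex.ext
  · have h1 : ∫ ω, (U ω * V ω).re ∂P = (∫ ω, U ω * V ω ∂P).re := by
      simpa using integral_re (𝕜 := ℂ) hUVint
    have h2 : ∫ ω, (U ω).re ∂P = (∫ ω, U ω ∂P).re := by simpa using integral_re (𝕜 := ℂ) hU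
    have h3 : ∫ ω, (V ω).re ∂P = (∫ ω, V ω ∂P).re := by simpa using integral_re (𝕜 := ℂ) hV
    have h4 : ∫ ω, (U ω).im ∂P = (∫ ω, U ω ∂P).im := by simpa using integral_im (𝕜 := ℂ) hU
    have h5 : ∫ ω, (V ω).im ∂P = (∫ ω, V ω ∂P).im := by simpa using integral_im (𝕜 := ℂ) hV
    rw [← h1]
    simp_rw [Complex.mul_re]
    rw [integral_sub hintrr hintii, hrr, hii, h2, h3, h4, h5]
  · have h1 : ∫ ω, (U ω * V ω).im ∂P = (∫ ω, U ω * V ω ∂P).im := by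
      simpa using integral_im (𝕜 := ℂ) hUVint
    have h2 : ∫ ω, (U ω).re ∂P = (∫ ω, U ω ∂P).re := by simpa using integral_re (𝕜 := ℂ) hU
    have h3 : ∫ ω, (V ω).re ∂P = (∫ ω, V ω ∂P).re := by simpa using integral_re (𝕜 := ℂ) hV
    have h4 : ∫ ω, (U ω).im ∂P = (∫ ω, U ω ∂P).im := by simpa using integral_im (𝕜 := ℂ) hU
    have h5 : ∫ ω, (V ω).im ∂P = (∫ ω, V ω ∂P).im := by simpa using integral_im (𝕜 := ℂ) hV
    rw [← h1]
    simp_rw [Complex.mul_im]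
    rw [integral_add hintri hintir, hri, hir, h2, h3, h4, h5]



lemma integral_finset_prod_indep {Ω : Type*} [MeasurableSpace Ω] {P : Measure Ω}
    [IsProbabilityMeasure P] {ι : Type*} [DecidableEq ι] {Y : ι → Ω → ℂ}
    (hmeas : ∀ m, Measurable (Y m)) (hbdd : ∀ m ω, ‖Y m ω‖ ≤ 1)
    (hind : iIndepFun Y P) (s : Finset ι) :
    ∫ ω, ∏ m ∈ s, Y m ω ∂P = ∏ m ∈ s, ∫ ω, Y m ω ∂P := by
  have hint : ∀ m, Integrable (Y m) P := fun m =>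
    (integrable_const (1:ℝ)).mono' (hmeas m).aestronglyMeasurable (ae_of_all _ (hbdd m))
  induction s using Finset.induction_on with
  | empty => simp
  | @insert i s hi ih =>
    have hprodmeas : Measurable (fun ω => ∏ m ∈ s, Y m ω) :=
      Finset.measurable_prod s (fun m _ => hmeas m)
    have hprodint : Integrable (fun ω => ∏ m ∈ s, Y m ω) P := by
      refine (integrable_const (1:ℝ)).mono' hprodmeas.aestronglyMeasurable (ae_of_all _ ?_)
      intro ω
      calc ‖∏ m ∈ s, Y m ω‖ ≤ ∏ m ∈ s, ‖Y m ω‖ := norm_prod_le _ _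
        _ ≤ ∏ m ∈ s, 1 := Finset.prod_le_prod (fun _ _ => norm_nonneg _)
            (fun m _ => hbdd m ω)
        _ = 1 := by simp
    have hindep2 : IndepFun (Y i) (fun ω => ∏ m ∈ s, Y m ω) P := by
      have h1 := hind.indepFun_finset_prod_of_notMem hmeas hi
      have : (∏ j ∈ s, Y j) = fun ω => ∏ m ∈ s, Y m ω := by
        funext ω; simp [Finset.prod_apply]
      rw [this] at h1
      exact h1.symm
    have hrw : (fun ω => ∏ m ∈ insert i s, Y m ω)
        = fun ω => Y i ω * ∏ m ∈ s, Y m ω := by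
      funext ω; rw [Finset.prod_insert hi]
    rw [Finset.prod_insert hi, hrw,
      indepFun_integral_mul_complex hindep2 (hint i) hprodint, ih]



lemma moment_bound {Ω : Type*} [MeasurableSpace Ω] (P : Measure Ω) [IsProbabilityMeasure P]
    {M : ℕ} {θ : Fin M → Ω → ℝ} (hθmeas : ∀ m, Measurable (θ m))
    (hindep : iIndepFun θ P)
    (hunif : ∀ m, Measure.map (θ m) P = uniformAngle)
    (u : Fin M → ℂ) (k : ℕ) :
    ∫ ω, ‖∑ m, Complex.exp (-(θ m ω : ℂ) * Complex.I) * u m‖ ^ (2 * k) ∂P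
      ≤ (k.factorial : ℝ) * (∑ m, ‖u m‖ ^ 2) ^ k := by
  classical
  set A : Finset (Fin M → ℕ) := Finset.piAntidiag Finset.univ k with hA
  set E : Fin M → Ω → ℂ := fun m ω => Complex.exp (-(θ m ω : ℂ) * Complex.I) with hE
  set S : Ω → ℂ := fun ω => ∑ m, E m ω * u m with hS
  -- the oscillating product
  set W : (Fin M → ℕ) → (Fin M → ℕ) → Ω → ℂ := fun α β ω =>
    ∏ m, Complex.exp ((((β m : ℤ) - (α m : ℤ) : ℤ) : ℂ) * (θ m ω : ℂ) * Complex.I) with hW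
  set c : (Fin M → ℕ) → (Fin M → ℕ) → ℂ := fun α β =>
    ((Nat.multinomial Finset.univ α : ℂ) * (Nat.multinomial Finset.univ β : ℂ)) *
      ((∏ m, u m ^ α m) * ∏ m, (starRingEnd ℂ) (u m) ^ β m) with hc
  -- Step 1: pointwise expansion
  have hconjE : ∀ m ω, (starRingEnd ℂ) (E m ω) = Complex.exp ((θ m ω : ℂ) * Complex.I) := by
    intro m ω
    rw [hE, ← Complex.exp_conj]
    congr 1
    simp [Complex.conj_I, Complex.conj_ofReal]
  have step1 : ∀ ω, ((‖S ω‖ ^ (2 * k) : ℝ) : ℂ) = ∑ α ∈ A, ∑ β ∈ A, c α β * W α β ω := by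
    intro ω
    have h0 : ((‖S ω‖ ^ (2 * k) : ℝ) : ℂ) = S ω ^ k * ((starRingEnd ℂ) (S ω)) ^ k := by
      rw [← mul_pow, Complex.mul_conj, pow_mul, Complex.normSq_eq_norm_sq]
      push_cast
      ring
    rw [h0]
    have h1 : S ω ^ k = ∑ α ∈ A, (Nat.multinomial Finset.univ α : ℂ) *
        ∏ m, (E m ω * u m) ^ α m := by
      rw [hS]
      exact Finset.sum_pow_eq_sum_piAntidiag Finset.univ _ k
    have h2 : ((starRingEnd ℂ) (S ω)) ^ k = ∑ β ∈ A, (Nat.multinomial Finset.univ β : ℂ) *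
        ∏ m, (Complex.exp ((θ m ω : ℂ) * Complex.I) * (starRingEnd ℂ) (u m)) ^ β m := by
      have : (starRingEnd ℂ) (S ω)
          = ∑ m, Complex.exp ((θ m ω : ℂ) * Complex.I) * (starRingEnd ℂ) (u m) := by
        rw [hS, map_sum]
        exact Finset.sum_congr rfl fun m _ => by rw [map_mul, hconjE]
      rw [this]
      exact Finset.sum_pow_eq_sum_piAntidiag Finset.univ _ k
    rw [h1, h2, Finset.sum_mul_sum]
    refine Finset.sum_congr rfl fun α hα => Finset.sum_congr rfl fun β hβ => ?_
    have hWterm : (∏ m, (E m ω) ^ α m) *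
        ∏ m, (Complex.exp ((θ m ω : ℂ) * Complex.I)) ^ β m = W α β ω := by
      rw [hW, ← Finset.prod_mul_distrib]
      refine Finset.prod_congr rfl fun m _ => ?_
      rw [hE, ← Complex.exp_nat_mul, ← Complex.exp_nat_mul, ← Complex.exp_add]
      congr 1
      push_cast
      ring
    calc ((Nat.multinomial Finset.univ α : ℂ) * ∏ m, (E m ω * u m) ^ α m) *
          ((Nat.multinomial Finset.univ β : ℂ) *
            ∏ m, (Complex.exp ((θ m ω : ℂ) * Complex.I) * (starRingEnd ℂ) (u m)) ^ β m)
        = c α β * ((∏ m, (E m ω) ^ α m) *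
            ∏ m, (Complex.exp ((θ m ω : ℂ) * Complex.I)) ^ β m) := by
          simp_rw [mul_pow, Finset.prod_mul_distrib, hc]
          ring
      _ = c α β * W α β ω := by rw [hWterm]
  -- measurability / integrability of W
  have hexpmeas : ∀ (z : ℂ) m, Measurable fun ω => Complex.exp (z * (θ m ω : ℂ) * Complex.I) := by
    intro z m
    exact (Complex.measurable_exp.comp
      ((Complex.measurable_ofReal.const_mul z).mul_const Complex.I)).comp (hθmeas m)
  have hexpnorm : ∀ (n : ℤ) (t : ℝ), ‖Complex.exp ((n : ℂ) * (t : ℂ) * Complex.I)‖ = 1 := by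
    intro n t
    rw [Complex.norm_exp]
    simp
  have hWmeas : ∀ α β, Measurable (W α β) := fun α β =>
    Finset.measurable_prod _ fun m _ => hexpmeas _ m
  have hWnorm : ∀ α β ω, ‖W α β ω‖ = 1 := by
    intro α β ω
    rw [hW]
    rw [norm_prod]
    exact Finset.prod_eq_one fun m _ => hexpnorm _ _
  have hWint : ∀ α β, Integrable (W α β) P := by
    intro α β
    refine (integrable_const (1:ℝ)).mono' (hWmeas α β).aestronglyMeasurable
      (ae_of_all _ fun ω => ?_)
    rw [hWnorm]
  -- Step 2 : value of ∫ W
  have step2 : ∀ α β, ∫ ω, W α β ω ∂P = if α = β then 1 else 0 := by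
    intro α β
    have hind2 : iIndepFun
        (fun m ω => Complex.exp ((((β m : ℤ) - (α m : ℤ) : ℤ) : ℂ) * (θ m ω : ℂ) * Complex.I))
        P := by
      refine hindep.comp
        (fun m => fun t : ℝ =>
          Complex.exp ((((β m : ℤ) - (α m : ℤ) : ℤ) : ℂ) * (t : ℂ) * Complex.I)) ?_
      intro m
      exact Complex.measurable_exp.comp
        ((Complex.measurable_ofReal.const_mul _).mul_const Complex.I)
    have hone : ∀ m, ∫ ω,
        Complex.exp ((((β m : ℤ) - (α m : ℤ) : ℤ) : ℂ) * (θ m ω : ℂ) * Complex.I) ∂P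
        = if ((β m : ℤ) - (α m : ℤ) : ℤ) = 0 then 1 else 0 := by
      intro m
      have hgm : Measurable fun t : ℝ =>
          Complex.exp ((((β m : ℤ) - (α m : ℤ) : ℤ) : ℂ) * (t : ℂ) * Complex.I) :=
        Complex.measurable_exp.comp
          ((Complex.measurable_ofReal.const_mul _).mul_const Complex.I)
      have hmap : ∫ ω,
          Complex.exp ((((β m : ℤ) - (α m : ℤ) : ℤ) : ℂ) * (θ m ω : ℂ) * Complex.I) ∂P
          = ∫ t, Complex.exp ((((β m : ℤ) - (α m : ℤ) : ℤ) : ℂ) * (t : ℂ) * Complex.I)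
              ∂(Measure.map (θ m) P) :=
        (integral_map (hθmeas m).aemeasurable hgm.aestronglyMeasurable).symm
      rw [hmap, hunif m, uniformAngle_exp_int]
    rw [hW]
    rw [integral_finset_prod_indep (fun m => hexpmeas _ m)
      (fun m ω => le_of_eq (hexpnorm _ _)) hind2 Finset.univ]
    rw [Finset.prod_congr rfl fun m _ => hone m]
    by_cases hab : α = β
    · subst hab
      simp
    · rw [if_neg hab]
      obtain ⟨m, hm⟩ : ∃ m, α m ≠ β m := by
        by_contra hcon
        push_neg at hcon
        exact hab (funext hcon)
      refine Finset.prod_eq_zero (Finset.mem_univ m) ?_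
      rw [if_neg]
      intro h0
      exact hm (by exact_mod_cast (sub_eq_zero.mp h0).symm)
  -- Step 3 : the exact value of the moment
  have hcdiag : ∀ α, c α α
      = (((Nat.multinomial Finset.univ α : ℝ) ^ 2 * ∏ m, (‖u m‖ ^ 2) ^ α m : ℝ) : ℂ) := by
    intro α
    simp only [hc]
    have hterm : ∀ m : Fin M, u m ^ α m * (starRingEnd ℂ) (u m) ^ α m
        = ((‖u m‖ ^ 2 : ℝ) : ℂ) ^ α m := by
      intro m
      rw [← mul_pow, Complex.mul_conj]
      norm_cast
      simp [Complex.normSq_eq_norm_sq]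
    rw [show (∏ m, u m ^ α m) * ∏ m, (starRingEnd ℂ) (u m) ^ α m
        = ∏ m, (u m ^ α m * (starRingEnd ℂ) (u m) ^ α m) from (Finset.prod_mul_distrib).symm]
    rw [Finset.prod_congr rfl fun m _ => hterm m]
    push_cast
    ring
  have key : ∫ ω, ‖S ω‖ ^ (2 * k) ∂P
      = ∑ α ∈ A, (Nat.multinomial Finset.univ α : ℝ) ^ 2 * ∏ m, (‖u m‖ ^ 2) ^ α m := by
    have hintW : ∀ α β, Integrable (fun ω => c α β * W α β ω) P :=
      fun α β => (hWint α β).const_mul _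
    have hT : ∫ ω, ((‖S ω‖ ^ (2 * k) : ℝ) : ℂ) ∂P = ∑ α ∈ A, c α α := by
      calc ∫ ω, ((‖S ω‖ ^ (2 * k) : ℝ) : ℂ) ∂P
          = ∫ ω, ∑ α ∈ A, ∑ β ∈ A, c α β * W α β ω ∂P :=
            integral_congr_ae (ae_of_all _ step1)
        _ = ∑ α ∈ A, ∑ β ∈ A, c α β * ∫ ω, W α β ω ∂P := by
            rw [integral_finset_sum _
              (fun α _ => integrable_finset_sum _ (fun β _ => hintW α β))]
            refine Finset.sum_congr rfl fun α _ => ?_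
            rw [integral_finset_sum _ (fun β _ => hintW α β)]
            exact Finset.sum_congr rfl fun β _ => integral_const_mul _ _
        _ = ∑ α ∈ A, ∑ β ∈ A, c α β * (if α = β then 1 else 0) := by
            exact Finset.sum_congr rfl fun α _ => Finset.sum_congr rfl fun β _ => by
              rw [step2]
        _ = ∑ α ∈ A, c α α := by
            refine Finset.sum_congr rfl fun α hα => ?_
            simp only [mul_ite, mul_one, mul_zero]
            rw [Finset.sum_ite_eq A α (fun β => c α β)]
            exact if_pos hα
    have hL : ∫ ω, ((‖S ω‖ ^ (2 * k) : ℝ) : ℂ) ∂P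
        = ((∫ ω, ‖S ω‖ ^ (2 * k) ∂P : ℝ) : ℂ) := integral_ofReal
    have hR : (∑ α ∈ A, c α α)
        = ((∑ α ∈ A, (Nat.multinomial Finset.univ α : ℝ) ^ 2 * ∏ m, (‖u m‖ ^ 2) ^ α m : ℝ) : ℂ) := by
      rw [Finset.sum_congr rfl fun α _ => hcdiag α]
      push_cast
      rfl
    have := (hL.symm.trans hT).trans hR
    exact_mod_cast this
  -- Step 4 : the bound
  rw [key, Finset.sum_pow_eq_sum_piAntidiag, Finset.mul_sum, ← hA]
  refine Finset.sum_le_sum fun α hα => ?_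
  have hprod : (0:ℝ) ≤ ∏ m, (‖u m‖ ^ 2) ^ α m :=
    Finset.prod_nonneg fun m _ => pow_nonneg (by positivity) _
  have hmle : (Nat.multinomial Finset.univ α : ℝ) ≤ k.factorial := by
    have hsum : ∑ m, α m = k := (Finset.mem_piAntidiag.mp hα).1
    have hdvd : Nat.multinomial Finset.univ α ∣ k.factorial := by
      refine ⟨∏ m, (α m).factorial, ?_⟩
      rw [← hsum, mul_comm]
      exact (Nat.multinomial_spec _ _).symm ▸ (Nat.multinomial_spec Finset.univ α).symm
    exact_mod_cast Nat.le_of_dvd (Nat.factorial_pos k) hdvd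
  have hm0 : (0:ℝ) ≤ (Nat.multinomial Finset.univ α : ℝ) := Nat.cast_nonneg _
  calc (Nat.multinomial Finset.univ α : ℝ) ^ 2 * ∏ m, (‖u m‖ ^ 2) ^ α m
      = ((Nat.multinomial Finset.univ α : ℝ) * (Nat.multinomial Finset.univ α : ℝ))
        * ∏ m, (‖u m‖ ^ 2) ^ α m := by ring
    _ ≤ ((k.factorial : ℝ) * (Nat.multinomial Finset.univ α : ℝ))
        * ∏ m, (‖u m‖ ^ 2) ^ α m :=
        mul_le_mul_of_nonneg_right (mul_le_mul_of_nonneg_right hmle hm0) hprod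
    _ = (k.factorial : ℝ) * ((Nat.multinomial Finset.univ α : ℝ)
        * ∏ m, (‖u m‖ ^ 2) ^ α m) := by ring



/-- Let `θ₁, …, θ_M` be i.i.d. uniform on `[0, 2π)`, `u ∈ ℂ^M` a fixed unit vector and
`X = |∑_m (1/√M) e^{-iθ_m} u_m|`.  Then for every `h ∈ [0, M/2)`,
`E[e^{h X²}] ≤ (1 - 2h/M)^{-1/2}`. -/
theorem stmt3 {Ω : Type*} [MeasurableSpace Ω] (P : Measure Ω) [IsProbabilityMeasure P]
    (M : ℕ) (θ : Fin M → Ω → ℝ) (hθmeas : ∀ m, Measurable (θ m))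
    (hindep : iIndepFun θ P)
    (hunif : ∀ m, Measure.map (θ m) P = uniformAngle)
    (u : Fin M → ℂ) (hu : ∑ m, ‖u m‖ ^ 2 = 1)
    (X : Ω → ℝ)
    (hX : ∀ ω, X ω = ‖∑ m, (Real.sqrt M : ℂ)⁻¹ * Complex.exp (-(θ m ω : ℂ) * Complex.I) * u m‖)
    (h : ℝ) (hh0 : 0 ≤ h) (hhM : h < M / 2) :
    ∫ ω, Real.exp (h * X ω ^ 2) ∂P ≤ (Real.sqrt (1 - 2 * h / M))⁻¹ := by
  classical
  rcases Nat.eq_zero_or_pos M with hM0 | hMpos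
  · exfalso
    subst hM0
    norm_num at hhM
    linarith
  have hM : (0:ℝ) < M := by exact_mod_cast hMpos
  set S : Ω → ℂ := fun ω => ∑ m, Complex.exp (-(θ m ω : ℂ) * Complex.I) * u m with hS
  have hSmeas : Measurable S := Finset.measurable_sum _ fun m _ =>
    (Complex.measurable_exp.comp
      ((Complex.measurable_ofReal.comp (hθmeas m)).neg.mul_const Complex.I)).mul_const _
  have hXeq : ∀ ω, X ω = (Real.sqrt M)⁻¹ * ‖S ω‖ := by
    intro ω
    rw [hX ω, show ∑ m, (Real.sqrt M : ℂ)⁻¹ * Complex.exp (-(θ m ω : ℂ) * Complex.I) * u m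
        = (Real.sqrt M : ℂ)⁻¹ * S ω by
      rw [hS, Finset.mul_sum]
      exact Finset.sum_congr rfl fun m _ => by ring]
    rw [norm_mul, norm_inv]
    congr 2
    simp [Real.sqrt_nonneg]
  have hX2 : ∀ ω, X ω ^ 2 = (M:ℝ)⁻¹ * ‖S ω‖ ^ 2 := by
    intro ω
    rw [hXeq ω, mul_pow, inv_pow, Real.sq_sqrt hM.le]
  have hXpow : ∀ (k : ℕ) ω, X ω ^ (2 * k) = ((M:ℝ)⁻¹) ^ k * ‖S ω‖ ^ (2 * k) := by
    intro k ω
    rw [pow_mul, hX2 ω, mul_pow, ← pow_mul]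
  have hXmeas : Measurable X := by
    rw [funext hXeq]
    exact hSmeas.norm.const_mul _
  have hXnn : ∀ ω, 0 ≤ X ω := fun ω => by rw [hXeq ω]; positivity
  set B : ℝ := ∑ m, ‖u m‖ with hB
  have hSB : ∀ ω, ‖S ω‖ ≤ B := by
    intro ω
    rw [hS]
    refine (norm_sum_le _ _).trans ?_
    refine Finset.sum_le_sum fun m _ => ?_
    rw [norm_mul, show ‖Complex.exp (-(θ m ω : ℂ) * Complex.I)‖ = 1 by
      rw [Complex.norm_exp]; simp, one_mul]
  have hXpowint : ∀ k : ℕ, Integrable (fun ω => X ω ^ (2*k)) P := by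
    intro k
    refine (integrable_const (((Real.sqrt M)⁻¹ * B) ^ (2*k))).mono'
      ((hXmeas.pow_const _).aestronglyMeasurable) (ae_of_all _ fun ω => ?_)
    rw [Real.norm_eq_abs, _root_.abs_of_nonneg (pow_nonneg (hXnn ω) _)]
    refine pow_le_pow_left₀ (hXnn ω) ?_ _
    rw [hXeq ω]
    exact mul_le_mul_of_nonneg_left (hSB ω) (by positivity)
  have hmom : ∀ k : ℕ, ∫ ω, X ω ^ (2*k) ∂P ≤ (k.factorial : ℝ) * ((M:ℝ)⁻¹)^k := by
    intro k
    have h1 : ∫ ω, X ω ^ (2*k) ∂P = ((M:ℝ)⁻¹)^k * ∫ ω, ‖S ω‖^(2*k) ∂P := by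
      simp_rw [hXpow k]
      exact integral_const_mul _ _
    have h2 := moment_bound P hθmeas hindep hunif u k
    rw [hu, one_pow, mul_one] at h2
    rw [h1]
    calc ((M:ℝ)⁻¹)^k * ∫ ω, ‖S ω‖^(2*k) ∂P ≤ ((M:ℝ)⁻¹)^k * k.factorial :=
          mul_le_mul_of_nonneg_left h2 (by positivity)
      _ = (k.factorial : ℝ) * ((M:ℝ)⁻¹)^k := by ring
  set r : ℝ := h * (M:ℝ)⁻¹ with hr
  have hr0 : 0 ≤ r := by positivity
  have hr1 : r < 1/2 := by
    rw [hr, ← div_eq_mul_inv, div_lt_div_iff₀ hM two_pos] at *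
    · linarith [hhM]
  have hint_lint : ∀ k : ℕ,
      ∫⁻ ω, ENNReal.ofReal ((h * X ω^2)^k / k.factorial) ∂P ≤ ENNReal.ofReal (r^k) := by
    intro k
    have hpt : ∀ ω, (h * X ω^2)^k / k.factorial = (h^k / k.factorial) * X ω ^ (2*k) := by
      intro ω
      rw [mul_pow, pow_mul]
      ring
    simp_rw [hpt, ENNReal.ofReal_mul (show (0:ℝ) ≤ h^k / k.factorial by positivity)]
    rw [lintegral_const_mul _ (show Measurable fun ω => ENNReal.ofReal (X ω ^ (2*k)) from
      ENNReal.measurable_ofReal.comp (hXmeas.pow_const _))]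
    rw [← ofReal_integral_eq_lintegral_ofReal (hXpowint k)
      (ae_of_all _ fun ω => pow_nonneg (hXnn ω) _)]
    calc ENNReal.ofReal (h^k / k.factorial) * ENNReal.ofReal (∫ ω, X ω ^ (2*k) ∂P)
        ≤ ENNReal.ofReal (h^k / k.factorial)
            * ENNReal.ofReal ((k.factorial : ℝ) * ((M:ℝ)⁻¹)^k) :=
          mul_le_mul_right (ENNReal.ofReal_le_ofReal (hmom k)) _
      _ = ENNReal.ofReal (h^k / k.factorial * ((k.factorial : ℝ) * ((M:ℝ)⁻¹)^k)) :=
          (ENNReal.ofReal_mul (by positivity)).symm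
      _ = ENNReal.ofReal (r^k) := by
          congr 1
          rw [hr, mul_pow]
          have : (k.factorial : ℝ) ≠ 0 := by exact_mod_cast k.factorial_ne_zero
          field_simp
  have hexp_expand : ∀ ω, ENNReal.ofReal (Real.exp (h * X ω^2))
      = ∑' k : ℕ, ENNReal.ofReal ((h * X ω^2)^k / k.factorial) := by
    intro ω
    rw [show Real.exp (h * X ω^2) = ∑' k:ℕ, (h * X ω^2)^k / k.factorial by
      rw [Real.exp_eq_exp_ℝ, NormedSpace.exp_eq_tsum_div]]
    exact ENNReal.ofReal_tsum_of_nonneg (fun k => by positivity)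
      (Real.summable_pow_div_factorial _)
  have hgmeas : Measurable fun ω => Real.exp (h * X ω^2) :=
    Real.measurable_exp.comp ((hXmeas.pow_const 2).const_mul h)
  have hlint_total : ∫⁻ ω, ENNReal.ofReal (Real.exp (h * X ω ^2)) ∂P
      ≤ ENNReal.ofReal ((1 - r)⁻¹) := by
    calc ∫⁻ ω, ENNReal.ofReal (Real.exp (h * X ω ^2)) ∂P
        = ∑' k : ℕ, ∫⁻ ω, ENNReal.ofReal ((h * X ω^2)^k / k.factorial) ∂P := by
          simp_rw [hexp_expand]
          exact lintegral_tsum fun k => (ENNReal.measurable_ofReal.comp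
            ((((hXmeas.pow_const 2).const_mul h).pow_const k).div_const _)).aemeasurable
      _ ≤ ∑' k : ℕ, ENNReal.ofReal (r^k) := ENNReal.tsum_le_tsum hint_lint
      _ = ∑' k : ℕ, (ENNReal.ofReal r)^k := by simp_rw [ENNReal.ofReal_pow hr0]
      _ = (1 - ENNReal.ofReal r)⁻¹ := ENNReal.tsum_geometric _
      _ = ENNReal.ofReal ((1 - r)⁻¹) := by
          rw [ENNReal.ofReal_inv_of_pos (show (0:ℝ) < 1 - r by linarith),
            ENNReal.ofReal_sub _ hr0, ENNReal.ofReal_one]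
  have hgint : Integrable (fun ω => Real.exp (h * X ω^2)) P := by
    refine ⟨hgmeas.aestronglyMeasurable, ?_⟩
    rw [hasFiniteIntegral_iff_ofReal (ae_of_all _ fun ω => (Real.exp_pos _).le)]
    exact lt_of_le_of_lt hlint_total ENNReal.ofReal_lt_top
  have hfin : ∫ ω, Real.exp (h * X ω^2) ∂P ≤ (1 - r)⁻¹ := by
    have h1 : ENNReal.ofReal (∫ ω, Real.exp (h * X ω^2) ∂P)
        = ∫⁻ ω, ENNReal.ofReal (Real.exp (h * X ω^2)) ∂P :=
      ofReal_integral_eq_lintegral_ofReal hgint (ae_of_all _ fun ω => (Real.exp_pos _).le)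
    have h2 : ENNReal.ofReal (∫ ω, Real.exp (h * X ω^2) ∂P)
        ≤ ENNReal.ofReal ((1 - r)⁻¹) := h1.le.trans hlint_total
    exact (ENNReal.ofReal_le_ofReal_iff (inv_nonneg.mpr (by linarith))).mp h2
  have hlast : (1 - r)⁻¹ ≤ (Real.sqrt (1 - 2*h/M))⁻¹ := by
    have h2r : 2*h/(M:ℝ) = 2*r := by
      rw [hr]
      ring
    rw [h2r]
    have hs1 : Real.sqrt (1 - 2*r) ≤ 1 - r := by
      have h1 : (0:ℝ) ≤ 1 - r := by linarith
      have := Real.sqrt_le_sqrt (show 1 - 2*r ≤ (1-r)^2 by nlinarith)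
      rwa [Real.sqrt_sq h1] at this
    have hpos : 0 < Real.sqrt (1 - 2*r) := Real.sqrt_pos.mpr (by linarith)
    exact inv_anti₀ hpos hs1
  exact hfin.trans hlast
end

section
/- Fix K ≥ 1, N ≥ 1, ε ∈ (0,1) with ε/(KN) < 1. The unique minimizer on (2, ∞) of f(g) = gK² ln( KN / (ε √(1 - 2/g)) ) is g_opt = 2 / (1 + 1/W₋₁( -(ε/(KN))² e^{-1} )), where W₋₁ is the lower branch of the Lambert W function (defined by z = W₋₁(z e^z) for z < -1). Moreover, at the optimum, f(g_opt) = g_opt K² / (g_opt - 2). -/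
set_option maxHeartbeats 800000


open Real

/-- Fix `K, N ≥ 1` and `ε ∈ (0,1)` with `ε/(KN) < 1`.  Encode the lower Lambert branch
value `w = W₋₁(-(ε/(KN))² e⁻¹)` by its defining property `w < -1` and
`w e^w = -(ε/(KN))² e⁻¹`.  Then `g_opt = 2/(1 + 1/w)` is the unique minimizer on
`(2, ∞)` of `f(g) = gK² ln(KN/(ε√(1 - 2/g)))`, and `f(g_opt) = g_opt K²/(g_opt - 2)`. -/
theorem stmt13 (K N : ℕ) (hK : 1 ≤ K) (hN : 1 ≤ N) (ε : ℝ) (hε0 : 0 < ε) (hε1 : ε < 1)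
    (hεKN : ε / ((K : ℝ) * N) < 1)
    (f : ℝ → ℝ)
    (hf : ∀ g, f g = g * (K : ℝ) ^ 2 *
      Real.log ((K : ℝ) * N / (ε * Real.sqrt (1 - 2 / g))))
    (w : ℝ) (hw : w < -1)
    (hwe : w * Real.exp w = -(ε / ((K : ℝ) * N)) ^ 2 * Real.exp (-1))
    (gopt : ℝ) (hgopt : gopt = 2 / (1 + 1 / w)) :
    gopt ∈ Set.Ioi (2 : ℝ) ∧
    (∀ g ∈ Set.Ioi (2 : ℝ), f gopt ≤ f g) ∧
    (∀ g ∈ Set.Ioi (2 : ℝ), g ≠ gopt → f gopt < f g) ∧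
    f gopt = gopt * (K : ℝ) ^ 2 / (gopt - 2) := by
  have hk1 : (1:ℝ) ≤ (K:ℝ) := by exact_mod_cast hK
  have hn1 : (1:ℝ) ≤ (N:ℝ) := by exact_mod_cast hN
  have hkn0 : (0:ℝ) < (K:ℝ) * N := by nlinarith
  have hK0 : (0:ℝ) < (K:ℝ) := by linarith
  have hw0 : w < 0 := by linarith
  have hnw : (0:ℝ) < -w := by linarith
  set α : ℝ := -1/w with hα
  have hα0 : 0 < α := by
    rw [hα, div_pos_iff]; right; constructor <;> linarith
  clear_value α
  have hwα : w = -(1/α) := by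
    rw [hα, one_div_div]
    field_simp
  have hnwα : -w = 1/α := by linarith
  have hα1 : α < 1 := by
    have h : α * (-w) = 1 := by
      rw [hα]; field_simp; exact div_self hw0.ne
    nlinarith
  -- key log identity
  have hswap : (-w) * Real.exp w = (ε/((K:ℝ)*N))^2 * Real.exp (-1) := by
    linear_combination -hwe
  have hr0 : (0:ℝ) < ε/((K:ℝ)*N) := div_pos hε0 hkn0
  have h1 : Real.log ((-w) * Real.exp w) = Real.log ((ε/((K:ℝ)*N))^2 * Real.exp (-1)) := by
    rw [hswap]
  rw [Real.log_mul hnw.ne' (Real.exp_ne_zero _), Real.log_exp,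
      Real.log_mul (pow_ne_zero _ hr0.ne') (Real.exp_ne_zero _), Real.log_exp,
      Real.log_pow] at h1
  push_cast at h1
  have hlogr : Real.log (ε/((K:ℝ)*N)) = Real.log ε - Real.log ((K:ℝ)*N) :=
    Real.log_div hε0.ne' hkn0.ne'
  have hlogw : Real.log (-w) = -Real.log α := by rw [hnwα, one_div, Real.log_inv]
  have hL : Real.log ((K:ℝ)*N) - Real.log ε = (1/α + Real.log α - 1)/2 := by
    rw [hlogw, hlogr] at h1
    rw [hwα] at h1
    linarith
  -- value of f on (2, ∞)
  have hfval : ∀ g : ℝ, 2 < g →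
      f g = (K:ℝ)^2 * (g/2) * (1/α - 1 + (Real.log α - Real.log (1 - 2/g))) := by
    intro g hg
    have hg0 : (0:ℝ) < g := by linarith
    have hβ0 : (0:ℝ) < 1 - 2/g := by
      have : 2/g < 1 := (div_lt_one hg0).mpr hg
      linarith
    have hs0 : 0 < Real.sqrt (1 - 2/g) := Real.sqrt_pos.mpr hβ0
    rw [hf, Real.log_div hkn0.ne' (by positivity), Real.log_mul hε0.ne' hs0.ne',
      Real.log_sqrt hβ0.le]
    linear_combination (g * (K:ℝ)^2) * hL
  -- gopt facts
  have h1α : (0:ℝ) < 1 - α := by linarith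
  have hgopt' : gopt = 2/(1-α) := by
    rw [hgopt]
    congr 1
    rw [hα]; ring
  have hgopt2 : 2 < gopt := by
    rw [hgopt', lt_div_iff₀ h1α]; nlinarith
  have hβopt : 1 - 2/gopt = α := by
    rw [hgopt']; field_simp; ring
  have hfopt : f gopt = (K:ℝ)^2 / α := by
    have h := hfval gopt hgopt2
    rw [hβopt] at h
    rw [h, hgopt']
    field_simp
    ring
  -- strict minimality
  have hmain : ∀ g ∈ Set.Ioi (2:ℝ), g ≠ gopt → f gopt < f g := by
    intro g hg hne
    have hg2 : (2:ℝ) < g := hg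
    have hg0 : (0:ℝ) < g := by linarith
    set β : ℝ := 1 - 2/g with hβdef
    clear_value β
    have hβ0 : (0:ℝ) < β := by
      have : 2/g < 1 := (div_lt_one hg0).mpr hg2
      rw [hβdef]; linarith
    have hβ1 : β < 1 := by
      have : 0 < 2/g := by positivity
      rw [hβdef]; linarith
    have hgval : g = 2/(1-β) := by
      rw [hβdef]; field_simp; ring
    have hβne : β ≠ α := by
      intro h
      apply hne
      rw [hgval, h, hgopt']
    have hs : α - β < α * (Real.log α - Real.log β) := by
      have h2 : Real.log (β/α) < β/α - 1 := by
        apply Real.log_lt_sub_one_of_pos (by positivity)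
        intro h
        exact hβne ((div_eq_one_iff_eq hα0.ne').mp h)
      rw [Real.log_div hβ0.ne' hα0.ne'] at h2
      have h3 := mul_lt_mul_of_pos_left h2 hα0
      have hcalc : α * (β/α - 1) = β - α := by field_simp
      rw [hcalc] at h3
      linarith [h3]
    have hgβ : g * (1 - β) = 2 := by
      rw [hβdef]; field_simp; ring
    have hKg : (0:ℝ) < (K:ℝ)^2 * g := by positivity
    have hpoly : (K:ℝ)^2 * (g*(1-β)) <
        (K:ℝ)^2 * (g*(1 - α + α*(Real.log α - Real.log β))) := by
      nlinarith [mul_lt_mul_of_pos_left hs hKg]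
    rw [hfopt, hfval g hg2, ← hβdef]
    have e1 : (K:ℝ)^2/α = (K:ℝ)^2*(g*(1-β))/(2*α) := by
      rw [hgβ]; field_simp
    have e2 : (K:ℝ)^2*(g/2)*(1/α - 1 + (Real.log α - Real.log β)) =
        (K:ℝ)^2*(g*(1 - α + α*(Real.log α - Real.log β)))/(2*α) := by
      field_simp
    rw [e1, e2]
    have h2α : (0:ℝ) < 2*α := by linarith
    simpa [div_eq_mul_inv] using
      mul_lt_mul_of_pos_right hpoly (by positivity : (0:ℝ) < (2*α)⁻¹)
  refine ⟨hgopt2, ?_, hmain, ?_⟩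
  · intro g hg
    rcases eq_or_ne g gopt with h | h
    · rw [h]
    · exact (hmain g hg h).le
  · have hd : gopt - 2 = 2*α/(1-α) := by
      rw [hgopt']; field_simp; ring
    rw [hfopt, hd, hgopt']
    rw [div_eq_div_iff hα0.ne' (by positivity : (2*α/(1-α)) ≠ 0)]
    · field_simp
end
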